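/- Let a(b) = c₂ √(1 − c₁/b) with c₂ > 0, c₁ > 0, on b > c₁. Then a satisfies the ODE a (b a'' + 2a') + b a'² = 0, and conversely this is the Euler–Lagrange equation (in a, with b as independent variable) of the functional P = ∫ √(8(2 b a a' + a²)) db. -/

import Mathlib

/-- Bianchi Type III example: `a(b) = c₂√(1 − c₁/b)` satisfies the ODE
`a(b a'' + 2a') + b a'² = 0` on `b > c₁`, and for any positive `C²`
configuration `A` with `2bAA' + A² > 0` this ODE is precisely the
Euler–Lagrange equation of the functional `P = ∫√(8(2bAA' + A²)) db`. -/
theorem stmt_18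
    (c₁ c₂ : ℝ) (hc₁ : 0 < c₁) (hc₂ : 0 < c₂)
    (a : ℝ → ℝ) (ha : ∀ b, a b = c₂ * Real.sqrt (1 - c₁ / b)) :
    (∀ b, c₁ < b →
      a b * (b * deriv (deriv a) b + 2 * deriv a b) + b * (deriv a b) ^ 2 = 0)
    ∧
    (∀ (A : ℝ → ℝ) (p q : ℝ), ContDiff ℝ 2 A →
      (∀ b ∈ Set.Ioo p q, 0 < A b) →
      (∀ b ∈ Set.Ioo p q, 0 < 2 * b * A b * deriv A b + (A b) ^ 2) →
      ((∀ b ∈ Set.Ioo p q,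
          deriv (fun x =>
            deriv (fun y => Real.sqrt (8 * (2 * x * A x * y + (A x) ^ 2)))
              (deriv A x)) b
          - deriv (fun x => Real.sqrt (8 * (2 * b * x * deriv A b + x ^ 2)))
              (A b) = 0)
        ↔
        (∀ b ∈ Set.Ioo p q,
          A b * (b * deriv (deriv A) b + 2 * deriv A b)
            + b * (deriv A b) ^ 2 = 0))) := by
  constructor
  · -- explicit solution satisfies the ODE
    have hae : a = fun b => c₂ * Real.sqrt (1 - c₁ / b) := funext ha
    have hu : ∀ b : ℝ, c₁ < b → 0 < 1 - c₁ / b := by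
      intro b hb
      have hb0 : 0 < b := hc₁.trans hb
      have : c₁ / b < 1 := (div_lt_one hb0).2 hb
      linarith
    have h1 : ∀ b : ℝ, c₁ < b → HasDerivAt (fun x : ℝ => 1 - c₁ / x) (c₁ * (b^2)⁻¹) b := by
      intro b hb
      have hb0 : (0:ℝ) < b := hc₁.trans hb
      have h := ((hasDerivAt_inv (ne_of_gt hb0)).const_mul c₁).const_sub 1
      simp only [div_eq_mul_inv]
      exact h.congr_deriv (by ring)
    have hD1 : ∀ b : ℝ, c₁ < b →
        HasDerivAt a (c₂ * (c₁ * (b^2)⁻¹ / (2 * Real.sqrt (1 - c₁ / b)))) b := by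
      intro b hb
      rw [hae]
      exact ((h1 b hb).sqrt (ne_of_gt (hu b hb))).const_mul c₂
    have hd1 : ∀ b : ℝ, c₁ < b →
        deriv a b = c₂ * (c₁ * (b^2)⁻¹ / (2 * Real.sqrt (1 - c₁ / b))) :=
      fun b hb => (hD1 b hb).deriv
    intro b hb
    have hb0 : (0:ℝ) < b := hc₁.trans hb
    have hub := hu b hb
    -- second derivative
    have hnum : HasDerivAt (fun x : ℝ => c₁ * (x^2)⁻¹) (-(c₁ * (2*b^1 / (b^2)^2))) b := by
      have hp : HasDerivAt (fun x : ℝ => x ^ 2) (2 * b^1) b := by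
        simpa using hasDerivAt_pow 2 b
      exact (hp.inv (by positivity)).const_mul c₁ |>.congr_deriv (by ring)
    have hden : HasDerivAt (fun x : ℝ => 2 * Real.sqrt (1 - c₁ / x))
        (2 * (c₁ * (b^2)⁻¹ / (2 * Real.sqrt (1 - c₁ / b)))) b :=
      (((h1 b hb).sqrt (ne_of_gt hub))).const_mul 2
    have hD2 : HasDerivAt (fun x : ℝ => c₂ * (c₁ * (x^2)⁻¹ / (2 * Real.sqrt (1 - c₁ / x))))
        (c₂ * ((-(c₁ * (2*b^1 / (b^2)^2)) * (2 * Real.sqrt (1 - c₁ / b))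
          - c₁ * (b^2)⁻¹ * (2 * (c₁ * (b^2)⁻¹ / (2 * Real.sqrt (1 - c₁ / b)))))
          / (2 * Real.sqrt (1 - c₁ / b))^2)) b :=
      (hnum.div hden (by positivity)).const_mul c₂
    have hd2 : deriv (deriv a) b =
        c₂ * ((-(c₁ * (2*b^1 / (b^2)^2)) * (2 * Real.sqrt (1 - c₁ / b))
          - c₁ * (b^2)⁻¹ * (2 * (c₁ * (b^2)⁻¹ / (2 * Real.sqrt (1 - c₁ / b)))))
          / (2 * Real.sqrt (1 - c₁ / b))^2) := by
      have hev : deriv a =ᶠ[nhds b]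
          (fun x : ℝ => c₂ * (c₁ * (x^2)⁻¹ / (2 * Real.sqrt (1 - c₁ / x)))) :=
        Filter.eventually_of_mem (Ioi_mem_nhds hb) (fun x hx => hd1 x hx)
      rw [hev.deriv_eq]
      exact hD2.deriv
    rw [hd1 b hb, hd2, ha b]
    have hs2 : Real.sqrt (1 - c₁ / b) ^ 2 = 1 - c₁ / b := Real.sq_sqrt hub.le
    have hspos : 0 < Real.sqrt (1 - c₁ / b) := Real.sqrt_pos.2 hub
    generalize hgen : Real.sqrt (1 - c₁ / b) = s at hs2 hspos ⊢
    have hbne : b ≠ 0 := ne_of_gt hb0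
    have hsne : s ≠ 0 := ne_of_gt hspos
    field_simp
    nlinarith [hs2, sq_nonneg s]
  · -- Euler–Lagrange equivalence
    intro A p q hA hApos hSpos
    obtain ⟨hA1, hA2, hA2c⟩ :
        Differentiable ℝ A ∧ Differentiable ℝ (deriv A) ∧ Continuous (deriv (deriv A)) := by
      rw [show (2 : WithTop ℕ∞) = 1 + 1 from rfl, contDiff_succ_iff_deriv] at hA
      obtain ⟨h1, -, h2⟩ := hA
      rw [contDiff_one_iff_deriv] at h2
      exact ⟨h1, h2.1, h2.2⟩
    set S : ℝ → ℝ := fun x => 2 * x * A x * deriv A x + (A x) ^ 2 with hSdef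
    -- derivative of S
    have hDS : ∀ x : ℝ, HasDerivAt S
        ((2 * 1 * A x + 2 * x * deriv A x) * deriv A x
          + 2 * x * A x * deriv (deriv A) x + 2 * A x ^ 1 * deriv A x) x := by
      intro x
      have h1 : HasDerivAt (fun y : ℝ => 2 * y * A y) (2 * 1 * A x + 2 * x * deriv A x) x := by
        have := ((hasDerivAt_id x).const_mul 2).mul (hA1 x).hasDerivAt
        exact this.congr_deriv (by simp only [id])
      have h2 := (h1.mul (hA2 x).hasDerivAt).add
        (((hA1 x).hasDerivAt.pow 2).congr_deriv (by ring : (2:ℕ) * A x ^ (2-1) * deriv A x = 2 * A x ^ 1 * deriv A x))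
      exact h2
    -- the inner partial derivative in A'
    have hinner : ∀ x ∈ Set.Ioo p q,
        deriv (fun y => Real.sqrt (8 * (2 * x * A x * y + (A x) ^ 2))) (deriv A x)
          = 8 * (2 * x * A x) / (2 * Real.sqrt (8 * S x)) := by
      intro x hx
      have hpos : 0 < 8 * S x := by have := hSpos x hx; simp only [hSdef]; linarith
      have hlin : HasDerivAt (fun y : ℝ => 8 * (2 * x * A x * y + (A x) ^ 2))
          (8 * (2 * x * A x)) (deriv A x) := by
        have := ((hasDerivAt_id (deriv A x)).const_mul (2 * x * A x)).add_const ((A x)^2)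
        simpa using (this.const_mul 8).congr_deriv (by ring)
      have := hlin.sqrt (by
        show 8 * (2 * x * A x * deriv A x + (A x) ^ 2) ≠ 0
        exact ne_of_gt hpos)
      exact this.deriv
    -- second term
    have houter : ∀ b ∈ Set.Ioo p q,
        deriv (fun x => Real.sqrt (8 * (2 * b * x * deriv A b + x ^ 2))) (A b)
          = 8 * (2 * b * deriv A b * 1 + 2 * A b ^ 1) / (2 * Real.sqrt (8 * S b)) := by
      intro b hb
      have hpos : 0 < 8 * S b := by have := hSpos b hb; simp only [hSdef]; linarith
      have hlin : HasDerivAt (fun x : ℝ => 8 * (2 * b * x * deriv A b + x ^ 2))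
          (8 * (2 * b * deriv A b * 1 + 2 * A b ^ 1)) (A b) := by
        have h1 : HasDerivAt (fun x : ℝ => 2 * b * x * deriv A b) (2 * b * deriv A b * 1) (A b) := by
          have := (hasDerivAt_id (A b)).const_mul (2 * b)
          exact (this.mul_const (deriv A b)).congr_deriv (by ring)
        exact ((h1.add (hasDerivAt_pow 2 (A b))).const_mul 8).congr_deriv (by ring)
      have := hlin.sqrt (by
        show 8 * (2 * b * A b * deriv A b + (A b) ^ 2) ≠ 0
        exact ne_of_gt hpos)
      exact this.deriv
    -- derivative of the first (momentum) term
    have hmom : ∀ b ∈ Set.Ioo p q,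
        deriv (fun x =>
            deriv (fun y => Real.sqrt (8 * (2 * x * A x * y + (A x) ^ 2))) (deriv A x)) b
          = ((8 * (2 * 1 * A b + 2 * b * deriv A b)) * (2 * Real.sqrt (8 * S b))
              - (8 * (2 * b * A b)) * (2 * (8 * ((2 * 1 * A b + 2 * b * deriv A b) * deriv A b
                  + 2 * b * A b * deriv (deriv A) b + 2 * A b ^ 1 * deriv A b)
                / (2 * Real.sqrt (8 * S b)))))
            / (2 * Real.sqrt (8 * S b)) ^ 2 := by
      intro b hb
      have hposb : 0 < 8 * S b := by have := hSpos b hb; simp only [hSdef]; linarith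
      have hev : (fun x =>
          deriv (fun y => Real.sqrt (8 * (2 * x * A x * y + (A x) ^ 2))) (deriv A x))
          =ᶠ[nhds b] (fun x => 8 * (2 * x * A x) / (2 * Real.sqrt (8 * S x))) :=
        Filter.eventually_of_mem (isOpen_Ioo.mem_nhds hb) (fun x hx => hinner x hx)
      rw [hev.deriv_eq]
      have hN : HasDerivAt (fun x : ℝ => 8 * (2 * x * A x))
          (8 * (2 * 1 * A b + 2 * b * deriv A b)) b := by
        have h1 : HasDerivAt (fun y : ℝ => 2 * y * A y) (2 * 1 * A b + 2 * b * deriv A b) b := by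
          have := ((hasDerivAt_id b).const_mul 2).mul (hA1 b).hasDerivAt
          exact this.congr_deriv (by simp only [id])
        exact h1.const_mul 8
      have hDen : HasDerivAt (fun x : ℝ => 2 * Real.sqrt (8 * S x))
          (2 * (8 * ((2 * 1 * A b + 2 * b * deriv A b) * deriv A b
              + 2 * b * A b * deriv (deriv A) b + 2 * A b ^ 1 * deriv A b)
            / (2 * Real.sqrt (8 * S b)))) b := by
        have h8S : HasDerivAt (fun x : ℝ => 8 * S x)
            (8 * ((2 * 1 * A b + 2 * b * deriv A b) * deriv A b
              + 2 * b * A b * deriv (deriv A) b + 2 * A b ^ 1 * deriv A b)) b :=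
          (hDS b).const_mul 8
        exact (h8S.sqrt (ne_of_gt hposb)).const_mul 2
      have hDne : 2 * Real.sqrt (8 * S b) ≠ 0 := by positivity
      exact (hN.div hDen hDne).deriv
    -- the key algebraic identity for the Euler–Lagrange expression
    have hkey : ∀ b ∈ Set.Ioo p q,
        deriv (fun x =>
            deriv (fun y => Real.sqrt (8 * (2 * x * A x * y + (A x) ^ 2))) (deriv A x)) b
          - deriv (fun x => Real.sqrt (8 * (2 * b * x * deriv A b + x ^ 2))) (A b)
        = -64 * b * A b * (A b * (b * deriv (deriv A) b + 2 * deriv A b)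
              + b * (deriv A b) ^ 2) / (Real.sqrt (8 * S b)) ^ 3 := by
      intro b hb
      rw [hmom b hb, houter b hb]
      have hposb : 0 < 8 * S b := by have := hSpos b hb; simp only [hSdef]; linarith
      have hs2 : Real.sqrt (8 * S b) ^ 2 = 8 * S b := Real.sq_sqrt hposb.le
      have hspos : 0 < Real.sqrt (8 * S b) := Real.sqrt_pos.2 hposb
      simp only [hSdef] at hs2 ⊢
      generalize hgen : Real.sqrt (8 * (2 * b * A b * deriv A b + A b ^ 2)) = s at hs2 hspos ⊢
      have hsne : s ≠ 0 := ne_of_gt hspos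
      field_simp
      nlinarith [hs2, hspos, sq_nonneg s]
    constructor
    · intro hEL
      have hODE' : ∀ b ∈ Set.Ioo p q, b ≠ 0 →
          A b * (b * deriv (deriv A) b + 2 * deriv A b) + b * (deriv A b) ^ 2 = 0 := by
        intro b hb hbne
        have h := hEL b hb
        rw [hkey b hb] at h
        have hposb : 0 < 8 * S b := by have := hSpos b hb; simp only [hSdef]; linarith
        have hspos : 0 < Real.sqrt (8 * S b) := Real.sqrt_pos.2 hposb
        have hAne : A b ≠ 0 := ne_of_gt (hApos b hb)
        have := div_eq_zero_iff.1 h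
        rcases this with h | h
        · have : b * (A b * ((A b * (b * deriv (deriv A) b + 2 * deriv A b)
              + b * (deriv A b) ^ 2))) = 0 := by linarith [h]
          rcases mul_eq_zero.1 this with h' | h'
          · exact absurd h' hbne
          · rcases mul_eq_zero.1 h' with h'' | h''
            · exact absurd h'' hAne
            · exact h''
        · exact absurd h (by positivity)
      intro b hb
      rcases eq_or_ne b 0 with rfl | hbne
      · -- continuity argument at 0
        set g : ℝ → ℝ := fun x =>
          A x * (x * deriv (deriv A) x + 2 * deriv A x) + x * (deriv A x) ^ 2 with hg
        have hgc : Continuous g := by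
          rw [hg]
          exact (hA1.continuous.mul ((continuous_id.mul hA2c).add (continuous_const.mul hA2.continuous))).add (continuous_id.mul (hA2.continuous.pow 2))
        have h1 : Filter.Tendsto g (nhdsWithin 0 {(0:ℝ)}ᶜ) (nhds (g 0)) :=
          (hgc.continuousAt).tendsto.mono_left nhdsWithin_le_nhds
        have h2 : Filter.Tendsto g (nhdsWithin 0 {(0:ℝ)}ᶜ) (nhds 0) := by
          have hmem : Set.Ioo p q ∩ {(0:ℝ)}ᶜ ∈ nhdsWithin 0 {(0:ℝ)}ᶜ :=
            Filter.inter_mem (mem_nhdsWithin_of_mem_nhds (isOpen_Ioo.mem_nhds hb))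
              self_mem_nhdsWithin
          have : g =ᶠ[nhdsWithin 0 {(0:ℝ)}ᶜ] (fun _ => 0) :=
            Filter.eventually_of_mem hmem (fun x hx => hODE' x hx.1 hx.2)
          exact Filter.Tendsto.congr' this.symm tendsto_const_nhds
        exact tendsto_nhds_unique h1 h2
      · exact hODE' b hb hbne
    · intro hODE b hb
      rw [hkey b hb, hODE b hb]
      simp
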